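/- Suppose F ∈ MDA(Λ) (the maximum domain of attraction of the Gumbel distribution) with auxiliary function f satisfying lim_{x↑x_R} Ḡ(x + t f(x))/Ḡ(x) = e^{-t} for all t where Ḡ is replaced by F̄. Then the equilibrium distribution G also belongs to MDA(Λ) with the same auxiliary function f; i.e., lim_{x↑x_R} Ḡ(x + t f(x))/Ḡ(x) = e^{-t} for all t ∈ ℝ. -/

import Mathlib

set_option maxHeartbeats 1000000

open Filter Set MeasureTheory Topology


-- Integrability of the tail on any Ioi
lemma aux_int (F : ℝ → ℝ) (hmono : Monotone F) (hFnn : ∀ x, 0 ≤ F x) (hFle : ∀ x, F x ≤ 1)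
    (hInt : IntegrableOn (fun t => 1 - F t) (Set.Ioi 0)) (x : ℝ) :
    IntegrableOn (fun t => 1 - F t) (Set.Ioi x) := by
  have hmeas : Measurable fun t => 1 - F t := (measurable_const.sub hmono.measurable)
  have h1 : IntegrableOn (fun t => 1 - F t) (Set.Ioc x 0) := by
    apply Measure.integrableOn_of_bounded (M := 1)
    · simp [Real.volume_Ioc]
    · exact hmeas.aestronglyMeasurable
    · filter_upwards with t
      rw [Real.norm_eq_abs, abs_le]
      constructor <;> nlinarith [hFnn t, hFle t]
  have hsub : Set.Ioi x ⊆ Set.Ioc x 0 ∪ Set.Ioi 0 := by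
    intro y hy
    rcases le_or_gt y 0 with h | h
    · exact Or.inl ⟨hy, h⟩
    · exact Or.inr h
  exact (h1.union hInt).mono_set hsub

-- Splitting the tail integral
lemma aux_split (F : ℝ → ℝ) (hmono : Monotone F) (hFnn : ∀ x, 0 ≤ F x) (hFle : ∀ x, F x ≤ 1)
    (hInt : IntegrableOn (fun t => 1 - F t) (Set.Ioi 0)) {a b : ℝ} (hab : a ≤ b) :
    (∫ s in Set.Ioi a, (1 - F s)) =
      (∫ s in Set.Ioc a b, (1 - F s)) + ∫ s in Set.Ioi b, (1 - F s) := by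
  rw [← MeasureTheory.setIntegral_union (Set.Ioc_disjoint_Ioi le_rfl) measurableSet_Ioi
      ((aux_int F hmono hFnn hFle hInt a).mono_set Set.Ioc_subset_Ioi_self)
      (aux_int F hmono hFnn hFle hInt b), Set.Ioc_union_Ioi_eq_Ioi hab]

-- bounds for the piece
lemma aux_piece_le (F : ℝ → ℝ) (hmono : Monotone F) (hFnn : ∀ x, 0 ≤ F x) (hFle : ∀ x, F x ≤ 1)
    (hInt : IntegrableOn (fun t => 1 - F t) (Set.Ioi 0)) {a b : ℝ} (hab : a ≤ b) :
    (∫ s in Set.Ioc a b, (1 - F s)) ≤ (b - a) * (1 - F a) := by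
  have h := MeasureTheory.setIntegral_mono_on
    (f := fun s => 1 - F s) (g := fun _ => 1 - F a) (s := Set.Ioc a b)
    ((aux_int F hmono hFnn hFle hInt a).mono_set Set.Ioc_subset_Ioi_self)
    (integrableOn_const (by simp [Real.volume_Ioc]))
    measurableSet_Ioc
    (fun s hs => by have := hmono hs.1.le; linarith)
  simpa [Real.volume_Ioc, ENNReal.toReal_ofReal (sub_nonneg.2 hab), max_eq_left (sub_nonneg.2 hab), mul_comm] using h

lemma aux_piece_ge (F : ℝ → ℝ) (hmono : Monotone F) (hFnn : ∀ x, 0 ≤ F x) (hFle : ∀ x, F x ≤ 1)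
    (hInt : IntegrableOn (fun t => 1 - F t) (Set.Ioi 0)) {a b : ℝ} (hab : a ≤ b) :
    (b - a) * (1 - F b) ≤ ∫ s in Set.Ioc a b, (1 - F s) := by
  have h := MeasureTheory.setIntegral_mono_on
    (f := fun _ => 1 - F b) (g := fun s => 1 - F s) (s := Set.Ioc a b)
    (integrableOn_const (by simp [Real.volume_Ioc]))
    ((aux_int F hmono hFnn hFle hInt a).mono_set Set.Ioc_subset_Ioi_self)
    measurableSet_Ioc
    (fun s hs => by have := hmono hs.2; linarith)
  simpa [Real.volume_Ioc, ENNReal.toReal_ofReal (sub_nonneg.2 hab), max_eq_left (sub_nonneg.2 hab), mul_comm] using h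

-- G nonneg
lemma aux_G_nonneg (F : ℝ → ℝ) (hFle : ∀ x, F x ≤ 1) (x : ℝ) :
    0 ≤ ∫ s in Set.Ioi x, (1 - F s) :=
  setIntegral_nonneg measurableSet_Ioi (fun s _ => by linarith [hFle s])


-- filter extraction lemma
lemma aux_goodD (F : ℝ → ℝ) (l : Filter ℝ)
    (hl : (l = atTop ∧ ∀ x, F x < 1) ∨
      (∃ xR : ℝ, l = nhdsWithin xR (Set.Iio xR) ∧ (∀ x < xR, F x < 1) ∧ ∀ x ≥ xR, F x = 1))
    (p : ℝ → Prop) (hp : ∀ᶠ x in l, p x) :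
    ∃ a, (∀ᶠ x in l, a ≤ x ∧ F x < 1) ∧ ∀ y, a ≤ y → F y < 1 → p y := by
  rcases hl with ⟨rfl, hall⟩ | ⟨xR, rfl, hlt, hge⟩
  · rcases eventually_atTop.1 hp with ⟨a, ha⟩
    exact ⟨a, by filter_upwards [eventually_ge_atTop a] with x hx using ⟨hx, hall x⟩,
      fun y hy _ => ha y hy⟩
  · rcases mem_nhdsLT_iff_exists_Ioo_subset.1 hp with ⟨a', ha', hsub⟩
    refine ⟨(a' + xR) / 2, ?_, ?_⟩
    · have hmem : Set.Ioo ((a' + xR) / 2) xR ∈ nhdsWithin xR (Set.Iio xR) :=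
        Ioo_mem_nhdsLT_of_mem ⟨by simp only [Set.mem_Iio] at ha'; linarith, le_rfl⟩
      filter_upwards [hmem] with x hx
      exact ⟨hx.1.le, hlt x hx.2⟩
    · intro y hy hFy
      have hyR : y < xR := by
        by_contra h
        exact absurd (hge y (not_lt.1 h)) (by linarith)
      apply hsub
      simp only [Set.mem_Iio] at ha'
      exact ⟨by linarith, hyR⟩

lemma aux_goodU (F : ℝ → ℝ) (l : Filter ℝ)
    (p : ℝ → Prop) (a : ℝ) (hev : ∀ᶠ x in l, a ≤ x ∧ F x < 1)
    (h : ∀ y, a ≤ y → F y < 1 → p y) : ∀ᶠ x in l, p x := by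
  filter_upwards [hev] with x hx using h x hx.1 hx.2

-- positivity of G
lemma aux_G_pos (F : ℝ → ℝ) (hmono : Monotone F) (hFnn : ∀ x, 0 ≤ F x) (hFle : ∀ x, F x ≤ 1)
    (hInt : IntegrableOn (fun t => 1 - F t) (Set.Ioi 0)) (l : Filter ℝ)
    (hl : (l = atTop ∧ ∀ x, F x < 1) ∨
      (∃ xR : ℝ, l = nhdsWithin xR (Set.Iio xR) ∧ (∀ x < xR, F x < 1) ∧ ∀ x ≥ xR, F x = 1))
    (x : ℝ) (hx : F x < 1) : 0 < ∫ s in Set.Ioi x, (1 - F s) := by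
  obtain ⟨m, hxm, hm⟩ : ∃ m, x < m ∧ F m < 1 := by
    rcases hl with ⟨rfl, hall⟩ | ⟨xR, rfl, hlt, hge⟩
    · exact ⟨x + 1, by linarith, hall _⟩
    · have hxR : x < xR := by
        by_contra h
        exact absurd (hge x (not_lt.1 h)) (by linarith)
      exact ⟨(x + xR) / 2, by linarith, hlt _ (by linarith)⟩
  have h1 := aux_piece_ge F hmono hFnn hFle hInt hxm.le
  have h2 := aux_split F hmono hFnn hFle hInt hxm.le
  have h3 := aux_G_nonneg F hFle m
  nlinarith [h1, h2, h3]


lemma aux_exp3 : (6:ℝ) < Real.exp 3 := by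
  have h : Real.exp 3 = (Real.exp 1)^3 := by
    rw [← Real.exp_nat_mul]; norm_num
  have he : (2.7:ℝ) < Real.exp 1 := by
    have := Real.exp_one_gt_d9; norm_num at this ⊢; linarith
  have h3 : (2.7:ℝ)^3 < (Real.exp 1)^3 := by gcongr <;> norm_num
  rw [h]; nlinarith [h3]

lemma aux_exp5 : (27:ℝ) < Real.exp 5 := by
  have h : Real.exp 5 = (Real.exp 1)^5 := by
    rw [← Real.exp_nat_mul]; norm_num
  have he : (2.7:ℝ) < Real.exp 1 := by
    have := Real.exp_one_gt_d9; norm_num at this ⊢; linarith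
  have h5 : (2.7:ℝ)^5 < (Real.exp 1)^5 := by gcongr <;> norm_num
  rw [h]; nlinarith [h5]

lemma aux_fstep (F f : ℝ → ℝ) (hmono : Monotone F) (T y : ℝ) (hT : 0 < T)
    (hfy : 0 < f y) (hFy : F y < 1)
    (hlow : (1/2) * Real.exp (-T) * (1 - F y) ≤ 1 - F (y + T * f y))
    (hhi : 1 - F (y + (T+4) * f y) ≤ (3/2) * Real.exp (-(T+4)) * (1 - F y))
    (hz : (1/2) * Real.exp (-1) * (1 - F (y + T * f y))
        ≤ 1 - F ((y + T * f y) + 1 * f (y + T * f y))) :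
    f (y + T * f y) ≤ (T+4) * f y := by
  by_contra hcon
  push_neg at hcon
  set z := y + T * f y with hzdef
  have hTf : 0 < T * f y := mul_pos hT hfy
  have horder : y + (T+4) * f y ≤ z + 1 * f z := by
    simp only [hzdef]; linarith
  have hFmono := hmono horder
  have hexp : Real.exp (-(T+4)) = Real.exp (-T) * Real.exp (-1) * Real.exp (-3) := by
    rw [← Real.exp_add, ← Real.exp_add]; ring_nf
  have he3 : 6 * Real.exp (-3) < 1 := by
    rw [Real.exp_neg, show (6:ℝ) * (Real.exp 3)⁻¹ = 6 / Real.exp 3 by ring,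
      div_lt_one (Real.exp_pos 3)]
    exact aux_exp3
  have hFb : 0 < 1 - F y := by linarith
  have h1 : (1/2) * Real.exp (-1) * ((1/2) * Real.exp (-T) * (1 - F y))
      ≤ (1/2) * Real.exp (-1) * (1 - F z) :=
    mul_le_mul_of_nonneg_left hlow (by positivity)
  have h2 : 1 - F (z + 1 * f z) ≤ 1 - F (y + (T+4) * f y) := by linarith
  have hchain : (1/2) * Real.exp (-1) * ((1/2) * Real.exp (-T) * (1 - F y))
      ≤ (3/2) * (Real.exp (-T) * Real.exp (-1) * Real.exp (-3)) * (1 - F y) := by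
    rw [← hexp]; linarith
  have hP : 0 < Real.exp (-1) * Real.exp (-T) * (1 - F y) := by positivity
  nlinarith [hP, he3, mul_pos (mul_pos (Real.exp_pos (-1)) (Real.exp_pos (-T))) hFb]

def chainSeq (f : ℝ → ℝ) (y : ℝ) : ℕ → ℝ
  | 0 => y
  | (k+1) => chainSeq f y k + 5 * f (chainSeq f y k)

lemma aux_GleB (F f : ℝ → ℝ) (hmono : Monotone F) (hFnn : ∀ x, 0 ≤ F x) (hFle : ∀ x, F x ≤ 1)
    (hInt : IntegrableOn (fun t => 1 - F t) (Set.Ioi 0)) (l : Filter ℝ)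
    (hl : (l = atTop ∧ ∀ x, F x < 1) ∨
      (∃ xR : ℝ, l = nhdsWithin xR (Set.Iio xR) ∧ (∀ x < xR, F x < 1) ∧ ∀ x ≥ xR, F x = 1))
    (a : ℝ)
    (hE : ∀ y, a ≤ y → F y < 1 →
      0 < f y ∧
      (1/2) * Real.exp (-1) * (1 - F y) ≤ 1 - F (y + 1 * f y) ∧
      (1/2) * Real.exp (-5) * (1 - F y) ≤ 1 - F (y + 5 * f y) ∧
      1 - F (y + 5 * f y) ≤ (3/2) * Real.exp (-5) * (1 - F y) ∧
      1 - F (y + 9 * f y) ≤ (3/2) * Real.exp (-9) * (1 - F y)) :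
    ∀ y, a ≤ y → F y < 1 →
      (∫ s in Set.Ioi y, (1 - F s)) ≤ 10 * (f y * (1 - F y)) := by
  intro y hay hFy
  obtain ⟨hfy0, -, -, -, -⟩ := hE y hay hFy
  have hFby : 0 < 1 - F y := by linarith
  obtain ⟨q, hqdef⟩ : ∃ q : ℝ, q = (3/2) * Real.exp (-5) := ⟨_, rfl⟩
  have hq0 : 0 < q := by rw [hqdef]; positivity
  have h9q : 9 * q ≤ 1/2 := by
    have h5 := aux_exp5
    have hp := Real.exp_pos (5:ℝ)
    rw [hqdef, Real.exp_neg,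
      show (9:ℝ) * ((3/2) * (Real.exp 5)⁻¹) = (27/2) / Real.exp 5 by field_simp; norm_num,
      div_le_iff₀ hp]
    linarith
  have hq1 : q < 1 := by linarith
  obtain ⟨Y, hY0, hYs⟩ : ∃ Y : ℕ → ℝ, Y 0 = y ∧ ∀ k, Y (k+1) = Y k + 5 * f (Y k) :=
    ⟨chainSeq f y, rfl, fun _ => rfl⟩
  -- the invariant
  have hinv : ∀ k, a ≤ Y k ∧ F (Y k) < 1 ∧ 0 < f (Y k) ∧ f (Y k) ≤ 9^k * f y ∧
      1 - F (Y k) ≤ q^k * (1 - F y) ∧ y ≤ Y k := by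
    intro k
    induction k with
    | zero => rw [hY0]; exact ⟨hay, hFy, hfy0, by simp, by simp, le_rfl⟩
    | succ k ih =>
      obtain ⟨hak, hFk, hfk, hfbd, htail, hyk⟩ := ih
      have hnext := hYs k
      obtain ⟨-, -, h5lo, h5hi, h9hi⟩ := hE (Y k) hak hFk
      rw [← hqdef] at h5hi
      have hzB : 0 < 1 - F (Y k) := by linarith
      have hlo' : 0 < 1 - F (Y k + 5 * f (Y k)) := lt_of_lt_of_le (by positivity) h5lo
      have hFk1 : F (Y k + 5 * f (Y k)) < 1 := by linarith
      have h5f : 0 < 5 * f (Y k) := by linarith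
      have hak1 : a ≤ Y k + 5 * f (Y k) := by linarith
      obtain ⟨hfk1, h1k1, -, -, -⟩ := hE (Y k + 5 * f (Y k)) hak1 hFk1
      have hfstep : f (Y k + 5 * f (Y k)) ≤ 9 * f (Y k) := by
        have h9 : 1 - F (Y k + ((5:ℝ)+4) * f (Y k))
            ≤ (3/2) * Real.exp (-((5:ℝ)+4)) * (1 - F (Y k)) := by
          rw [show ((5:ℝ)+4) = 9 by norm_num]
          exact h9hi
        have := aux_fstep F f hmono 5 (Y k) (by norm_num) hfk hFk h5lo h9 h1k1
        linarith
      rw [hnext]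
      refine ⟨hak1, hFk1, hfk1, ?_, ?_, by linarith⟩
      · calc f (Y k + 5 * f (Y k)) ≤ 9 * f (Y k) := hfstep
        _ ≤ 9 * (9^k * f y) := by linarith [mul_le_mul_of_nonneg_left hfbd (by norm_num : (0:ℝ) ≤ 9)]
        _ = 9^(k+1) * f y := by rw [pow_succ]; ring
      · calc 1 - F (Y k + 5 * f (Y k)) ≤ q * (1 - F (Y k)) := h5hi
        _ ≤ q * (q^k * (1 - F y)) := mul_le_mul_of_nonneg_left htail hq0.le
        _ = q^(k+1) * (1 - F y) := by rw [pow_succ]; ring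
  -- piece bound
  have hstep : ∀ k, Y k ≤ Y (k+1) := by
    intro k
    obtain ⟨-, -, hfk, -, -, -⟩ := hinv k
    rw [hYs k]; linarith
  have hpiece : ∀ k, (∫ s in Set.Ioi (Y k), (1 - F s)) - (∫ s in Set.Ioi (Y (k+1)), (1 - F s))
      ≤ 5 * (9^k * q^k) * (f y * (1 - F y)) := by
    intro k
    obtain ⟨hak, hFk, hfk, hfbd, htail, hyk⟩ := hinv k
    have hsplit := aux_split F hmono hFnn hFle hInt (hstep k)
    have hle := aux_piece_le F hmono hFnn hFle hInt (hstep k)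
    have hdiff : Y (k+1) - Y k = 5 * f (Y k) := by rw [hYs k]; ring
    rw [hdiff] at hle
    have hzB : 0 < 1 - F (Y k) := by linarith
    have h1 : f (Y k) * (1 - F (Y k)) ≤ (9^k * f y) * (q^k * (1 - F y)) :=
      mul_le_mul hfbd htail hzB.le (by positivity)
    have hprod : 5 * f (Y k) * (1 - F (Y k)) ≤ 5 * (9^k * q^k) * (f y * (1 - F y)) := by
      have h2 : (9^k * f y) * (q^k * (1 - F y)) = (9^k * q^k) * (f y * (1 - F y)) := by ring
      nlinarith [h1]
    linarith
  -- telescoping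
  have htel : ∀ n, (∫ s in Set.Ioi y, (1 - F s))
      ≤ 10 * (f y * (1 - F y)) + (∫ s in Set.Ioi (Y n), (1 - F s)) := by
    intro n
    have hsum := Finset.sum_range_sub' (fun k => ∫ s in Set.Ioi (Y k), (1 - F s)) n
    have hsumle : ∑ k ∈ Finset.range n,
        ((∫ s in Set.Ioi (Y k), (1 - F s)) - (∫ s in Set.Ioi (Y (k+1)), (1 - F s)))
        ≤ ∑ k ∈ Finset.range n, 5 * (9^k * q^k) * (f y * (1 - F y)) :=
      Finset.sum_le_sum (fun k _ => hpiece k)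
    have hgeom : ∑ k ∈ Finset.range n, 5 * ((9:ℝ)^k * q^k) * (f y * (1 - F y))
        ≤ 10 * (f y * (1 - F y)) := by
      have h1 : ∀ k : ℕ, (9:ℝ)^k * q^k ≤ ((1:ℝ)/2)^k := by
        intro k
        rw [← mul_pow]
        exact pow_le_pow_left₀ (by positivity) (by linarith) k
      calc ∑ k ∈ Finset.range n, 5 * ((9:ℝ)^k * q^k) * (f y * (1 - F y))
          ≤ ∑ k ∈ Finset.range n, 5 * ((1:ℝ)/2)^k * (f y * (1 - F y)) := by
            apply Finset.sum_le_sum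
            intro k _
            have h2 := h1 k
            have h3 : (0:ℝ) ≤ f y * (1 - F y) := by positivity
            nlinarith
        _ = 5 * (f y * (1 - F y)) * ∑ k ∈ Finset.range n, ((1:ℝ)/2)^k := by
            rw [Finset.mul_sum]
            congr 1
            ext k
            ring
        _ ≤ 5 * (f y * (1 - F y)) * 2 := by
            have h4 := sum_geometric_two_le n
            have h3 : (0:ℝ) ≤ 5 * (f y * (1 - F y)) := by positivity
            exact mul_le_mul_of_nonneg_left h4 h3
        _ = 10 * (f y * (1 - F y)) := by ring
    rw [hY0] at hsum
    linarith [hsum ▸ hsumle]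
  -- G (Y n) gets small
  have hsmall : ∀ ε : ℝ, 0 < ε → ∃ n, (∫ s in Set.Ioi (Y n), (1 - F s)) ≤ ε := by
    intro ε hε
    rcases hl with ⟨-, hall⟩ | ⟨xR, -, hlt, hge⟩
    · -- infinite endpoint case
      have hG0 : Tendsto (fun b => ∫ s in (0:ℝ)..b, (1 - F s)) atTop
          (𝓝 (∫ s in Set.Ioi (0:ℝ), (1 - F s))) :=
        intervalIntegral_tendsto_integral_Ioi 0 hInt tendsto_id
      obtain ⟨N, hN⟩ := (Metric.tendsto_atTop.1 hG0) ε hε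
      have hdist := hN (max N 0) (le_max_left _ _)
      rw [Real.dist_eq, abs_lt] at hdist
      have hz00 : (0:ℝ) ≤ max N 0 := le_max_right _ _
      have hsplit0 := aux_split F hmono hFnn hFle hInt hz00
      rw [intervalIntegral.integral_of_le hz00] at hdist
      have hGz0 : (∫ s in Set.Ioi (max N 0), (1 - F s)) < ε := by linarith
      have hex : ∃ n, max N 0 ≤ Y n := by
        by_contra hcon
        push_neg at hcon
        have hFz0 : 0 < 1 - F (max N 0) := by linarith [hall (max N 0)]
        obtain ⟨n, hn⟩ := exists_pow_lt_of_lt_one (x := (1 - F (max N 0))/(1 - F y)) (y := q)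
          (by positivity) hq1
        obtain ⟨-, -, -, -, htail, -⟩ := hinv n
        rw [lt_div_iff₀ hFby] at hn
        have h1 : 1 - F (max N 0) ≤ 1 - F (Y n) := by
          have := hmono (hcon n).le; linarith
        linarith
      obtain ⟨n, hn⟩ := hex
      refine ⟨n, ?_⟩
      have hsplitn := aux_split F hmono hFnn hFle hInt hn
      have hnn : 0 ≤ ∫ s in Set.Ioc (max N 0) (Y n), (1 - F s) :=
        setIntegral_nonneg measurableSet_Ioc (fun s _ => by linarith [hFle s])
      linarith
    · -- finite endpoint case
      have hGxR : (∫ s in Set.Ioi xR, (1 - F s)) = 0 := by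
        rw [setIntegral_congr_fun measurableSet_Ioi
          (g := fun _ => (0:ℝ)) (fun s hs => by
            have h := hge s (le_of_lt hs)
            simp only [h, sub_self])]
        simp
      have hyR : y < xR := by
        by_contra h
        exact absurd (hge y (not_lt.1 h)) (by linarith)
      have hc : 0 < (xR - y) * (1 - F y) := by nlinarith
      obtain ⟨n, hn⟩ := exists_pow_lt_of_lt_one (x := ε / ((xR - y) * (1 - F y)))
        (y := q) (by positivity) hq1
      refine ⟨n, ?_⟩
      obtain ⟨-, hFn, -, -, htail, hyn⟩ := hinv n
      have hYnR : Y n < xR := by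
        by_contra h
        exact absurd (hge (Y n) (not_lt.1 h)) (by linarith)
      have hsplitn := aux_split F hmono hFnn hFle hInt hYnR.le
      have hle := aux_piece_le F hmono hFnn hFle hInt hYnR.le
      have hbound : (xR - Y n) * (1 - F (Y n)) ≤ (xR - y) * (q^n * (1 - F y)) :=
        mul_le_mul (by linarith) htail (by linarith [hFle (Y n)]) (by linarith)
      rw [lt_div_iff₀ hc] at hn
      have heq : (xR - y) * (q^n * (1 - F y)) = q^n * ((xR - y) * (1 - F y)) := by ring
      linarith
  -- conclusion
  apply le_of_forall_pos_le_add
  intro ε hε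
  obtain ⟨n, hn⟩ := hsmall ε hε
  linarith [htel n]

-- termwise exponential estimates
lemma aux_exp_term_up (h : ℝ) (hh : 0 < h) (A : ℝ) (hA : 0 < A) :
    h * A ≤ (1 + h) * (A - A * Real.exp (-h)) := by
  have k1 : (h+1) * Real.exp (-h) ≤ 1 := by
    have := Real.add_one_le_exp h
    have he : 0 < Real.exp h := Real.exp_pos h
    rw [Real.exp_neg]
    rw [show (h+1) * (Real.exp h)⁻¹ = (h+1) / Real.exp h by ring, div_le_one he]
    linarith
  nlinarith [Real.exp_pos (-h)]

lemma aux_exp_term_lo (h : ℝ) (hh : 0 < h) (A : ℝ) (hA : 0 < A) :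
    (1 - h) * (A - A * Real.exp (-h)) ≤ h * (A * Real.exp (-h)) := by
  have k1 : 1 - h ≤ Real.exp (-h) := by linarith [Real.add_one_le_exp (-h)]
  nlinarith

-- sum estimates: u_j = t + j*(L/m)
lemma aux_expsum (t L : ℝ) (hL : 0 < L) (m : ℕ) (hm : 0 < m) :
    (1 - L/m) * (Real.exp (-t) - Real.exp (-(t+L)))
      ≤ (L/m) * ∑ j ∈ Finset.range m, Real.exp (-(t + ((j:ℝ)+1)*(L/m)))
    ∧ (L/m) * ∑ j ∈ Finset.range m, Real.exp (-(t + (j:ℝ)*(L/m)))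
      ≤ (1 + L/m) * (Real.exp (-t) - Real.exp (-(t+L))) := by
  have hm0 : 0 < (m:ℝ) := Nat.cast_pos.2 hm
  set h := L/m with hdef
  have hh : 0 < h := div_pos hL hm0
  have hstepeq : ∀ j : ℕ, Real.exp (-(t + ((j:ℝ)+1)*h)) = Real.exp (-(t + (j:ℝ)*h)) * Real.exp (-h) := by
    intro j
    rw [← Real.exp_add]
    congr 1
    ring
  have htel : ∑ j ∈ Finset.range m,
      (Real.exp (-(t + (j:ℝ)*h)) - Real.exp (-(t + ((j:ℝ)+1)*h)))
      = Real.exp (-t) - Real.exp (-(t+L)) := by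
    have := Finset.sum_range_sub' (fun j => Real.exp (-(t + (j:ℝ)*h))) m
    simp only [Nat.cast_add, Nat.cast_one] at this
    rw [this]
    congr 2
    · norm_num
    · rw [hdef]; field_simp
  constructor
  · -- lower bound
    have hterm : ∀ j ∈ Finset.range m,
        (1-h) * (Real.exp (-(t + (j:ℝ)*h)) - Real.exp (-(t + ((j:ℝ)+1)*h)))
          ≤ h * Real.exp (-(t + ((j:ℝ)+1)*h)) := by
      intro j _
      rw [hstepeq j]
      have := aux_exp_term_lo h hh (Real.exp (-(t + (j:ℝ)*h))) (Real.exp_pos _)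
      linarith
    have hsum := Finset.sum_le_sum hterm
    rw [← Finset.mul_sum, ← Finset.mul_sum, htel] at hsum
    exact hsum
  · -- upper bound
    have hterm : ∀ j ∈ Finset.range m,
        h * Real.exp (-(t + (j:ℝ)*h))
          ≤ (1+h) * (Real.exp (-(t + (j:ℝ)*h)) - Real.exp (-(t + ((j:ℝ)+1)*h))) := by
      intro j _
      rw [hstepeq j]
      have := aux_exp_term_up h hh (Real.exp (-(t + (j:ℝ)*h))) (Real.exp_pos _)
      linarith
    have hsum := Finset.sum_le_sum hterm
    rw [← Finset.mul_sum, ← Finset.mul_sum, htel] at hsum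
    exact hsum

-- eventually F x < 1
lemma aux_evF (F : ℝ → ℝ) (l : Filter ℝ)
    (hl : (l = atTop ∧ ∀ x, F x < 1) ∨
      (∃ xR : ℝ, l = nhdsWithin xR (Set.Iio xR) ∧ (∀ x < xR, F x < 1) ∧ ∀ x ≥ xR, F x = 1)) :
    ∀ᶠ x in l, F x < 1 := by
  rcases hl with ⟨rfl, hall⟩ | ⟨xR, rfl, hlt, hge⟩
  · exact Eventually.of_forall hall
  · filter_upwards [self_mem_nhdsWithin] with x hx
    exact hlt x hx

-- eventually f x > 0
lemma aux_evf (F f : ℝ → ℝ) (hmono : Monotone F) (l : Filter ℝ)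
    (hl : (l = atTop ∧ ∀ x, F x < 1) ∨
      (∃ xR : ℝ, l = nhdsWithin xR (Set.Iio xR) ∧ (∀ x < xR, F x < 1) ∧ ∀ x ≥ xR, F x = 1))
    (haux : ∀ t : ℝ,
      Tendsto (fun x => (1 - F (x + t * f x)) / (1 - F x)) l (nhds (Real.exp (-t)))) :
    ∀ᶠ x in l, 0 < f x := by
  have he1 : Real.exp (-1) < 1 := by
    rw [Real.exp_lt_one_iff]; norm_num
  have hev := Metric.tendsto_nhds.1 (haux 1) ((1 - Real.exp (-1))/2) (by linarith)
  filter_upwards [hev, aux_evF F l hl] with x hx hFx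
  rw [Real.dist_eq, abs_lt] at hx
  by_contra hcon
  push_neg at hcon
  have hle : x + 1 * f x ≤ x := by linarith
  have hmle := hmono hle
  have hB : 0 < 1 - F x := by linarith
  have hge1 : 1 ≤ (1 - F (x + 1 * f x)) / (1 - F x) := by
    rw [le_div_iff₀ hB]
    linarith
  linarith

-- the Riemann sum limit lemma
lemma aux_C (F f : ℝ → ℝ) (hmono : Monotone F) (hFnn : ∀ x, 0 ≤ F x) (hFle : ∀ x, F x ≤ 1)
    (hInt : IntegrableOn (fun t => 1 - F t) (Set.Ioi 0)) (l : Filter ℝ)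
    (hl : (l = atTop ∧ ∀ x, F x < 1) ∨
      (∃ xR : ℝ, l = nhdsWithin xR (Set.Iio xR) ∧ (∀ x < xR, F x < 1) ∧ ∀ x ≥ xR, F x = 1))
    (haux : ∀ t : ℝ,
      Tendsto (fun x => (1 - F (x + t * f x)) / (1 - F x)) l (nhds (Real.exp (-t))))
    (t s : ℝ) (hts : t ≤ s) :
    Tendsto (fun x => ((∫ u in Set.Ioi (x + t * f x), (1 - F u))
        - (∫ u in Set.Ioi (x + s * f x), (1 - F u))) / (f x * (1 - F x)))
      l (𝓝 (Real.exp (-t) - Real.exp (-s))) := by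
  rcases eq_or_lt_of_le hts with rfl | hlt
  · simp only [sub_self, zero_div]
    exact tendsto_const_nhds
  set L := s - t with hLdef
  have hL : 0 < L := by simp only [hLdef]; linarith
  clear_value L
  rw [Metric.tendsto_nhds]
  intro ε hε
  -- choose m
  obtain ⟨m, hmgt⟩ := exists_nat_gt (max 1 (2 * L * Real.exp (-t) / ε))
  have hm1 : (1:ℝ) ≤ m := le_of_lt (lt_of_le_of_lt (le_max_left _ _) hmgt)
  have hm0 : (0:ℝ) < m := by linarith
  have hmN : 0 < m := by exact_mod_cast hm0
  have hhalf : (L/m) * Real.exp (-t) < ε/2 := by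
    have h2 : 2 * L * Real.exp (-t) / ε < m := lt_of_le_of_lt (le_max_right _ _) hmgt
    rw [div_lt_iff₀ hε] at h2
    rw [div_mul_eq_mul_div, div_lt_iff₀ hm0,
      show ε/2*(m:ℝ) = (m:ℝ)*ε/2 by ring, lt_div_iff₀ (by norm_num : (0:ℝ) < 2)]
    nlinarith [h2]
  set ε' := ε / (2*(L+1)) with hε'def
  have hε'pos : 0 < ε' := by positivity
  clear_value ε' 
  have hLε' : L * ε' < ε/2 := by
    rw [hε'def, mul_div_assoc']
    rw [div_lt_iff₀ (by linarith : (0:ℝ) < 2*(L+1))]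
    nlinarith
  -- the eventual set
  have hevj : ∀ᶠ x in l, ∀ j ∈ Finset.range (m+1),
      |(1 - F (x + (t + (j:ℝ)*(L/m)) * f x)) / (1 - F x) - Real.exp (-(t + (j:ℝ)*(L/m)))| < ε' := by
    rw [Filter.eventually_all_finset]
    intro j _
    have := Metric.tendsto_nhds.1 (haux (t + (j:ℝ)*(L/m))) ε' hε'pos
    filter_upwards [this] with x hx
    rwa [Real.dist_eq] at hx
  filter_upwards [hevj, aux_evF F l hl, aux_evf F f hmono l hl haux] with x hj hFx hfx
  -- pointwise computation
  have hB : 0 < 1 - F x := by linarith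
  have hP : 0 < f x * (1 - F x) := mul_pos hfx hB
  set c : ℕ → ℝ := fun j => x + (t + (j:ℝ)*(L/m)) * f x with hcdef
  have hcstep : ∀ j, c j ≤ c (j+1) := by
    intro j
    simp only [hcdef]
    push_cast
    have : 0 < (L/m) * f x := mul_pos (div_pos hL hm0) hfx
    nlinarith
  have hcdiff : ∀ j : ℕ, c (j+1) - c j = (L/m) * f x := by
    intro j
    simp only [hcdef]
    push_cast
    ring
  -- ratio bounds
  have hrlo : ∀ j ∈ Finset.range (m+1),
      (Real.exp (-(t + (j:ℝ)*(L/m))) - ε') * (1 - F x) ≤ 1 - F (c j) := by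
    intro j hjm
    have := hj j hjm
    rw [abs_lt] at this
    have h3 : Real.exp (-(t + (j:ℝ)*(L/m))) - ε' < (1 - F (x + (t + (j:ℝ)*(L/m)) * f x)) / (1 - F x) := by
      linarith [this.1]
    rw [lt_div_iff₀ hB] at h3
    simp only [hcdef]
    linarith
  have hrhi : ∀ j ∈ Finset.range (m+1),
      1 - F (c j) ≤ (Real.exp (-(t + (j:ℝ)*(L/m))) + ε') * (1 - F x) := by
    intro j hjm
    have := hj j hjm
    rw [abs_lt] at this
    have h3 : (1 - F (x + (t + (j:ℝ)*(L/m)) * f x)) / (1 - F x) < Real.exp (-(t + (j:ℝ)*(L/m))) + ε' := by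
      linarith [this.2]
    rw [div_lt_iff₀ hB] at h3
    simp only [hcdef]
    linarith
  -- piece bounds
  have hup : ∀ j ∈ Finset.range m,
      (∫ u in Set.Ioi (c j), (1 - F u)) - (∫ u in Set.Ioi (c (j+1)), (1 - F u))
        ≤ (L/m) * f x * ((Real.exp (-(t + (j:ℝ)*(L/m))) + ε') * (1 - F x)) := by
    intro j hjm
    rw [Finset.mem_range] at hjm
    have hsplit := aux_split F hmono hFnn hFle hInt (hcstep j)
    have hle := aux_piece_le F hmono hFnn hFle hInt (hcstep j)
    rw [hcdiff j] at hle
    have hr := hrhi j (Finset.mem_range.2 (by omega))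
    have hnn : 0 ≤ (L/m) * f x := le_of_lt (mul_pos (div_pos hL hm0) hfx)
    nlinarith
  have hlo : ∀ j ∈ Finset.range m,
      (L/m) * f x * ((Real.exp (-(t + ((j:ℝ)+1)*(L/m))) - ε') * (1 - F x))
        ≤ (∫ u in Set.Ioi (c j), (1 - F u)) - (∫ u in Set.Ioi (c (j+1)), (1 - F u)) := by
    intro j hjm
    rw [Finset.mem_range] at hjm
    have hsplit := aux_split F hmono hFnn hFle hInt (hcstep j)
    have hge := aux_piece_ge F hmono hFnn hFle hInt (hcstep j)
    rw [hcdiff j] at hge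
    have hr := hrlo (j+1) (Finset.mem_range.2 (by omega))
    push_cast at hr
    have hnn : 0 ≤ (L/m) * f x := le_of_lt (mul_pos (div_pos hL hm0) hfx)
    nlinarith
  -- telescoping
  have htel := Finset.sum_range_sub' (fun j => ∫ u in Set.Ioi (c j), (1 - F u)) m
  have hsumup := Finset.sum_le_sum hup
  have hsumlo := Finset.sum_le_sum hlo
  rw [htel] at hsumup hsumlo
  -- rewrite the sums
  have hrw1 : ∑ j ∈ Finset.range m, (L/m) * f x * ((Real.exp (-(t + (j:ℝ)*(L/m))) + ε') * (1 - F x))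
      = f x * (1 - F x) * ((L/m) * ∑ j ∈ Finset.range m, Real.exp (-(t + (j:ℝ)*(L/m))))
        + f x * (1 - F x) * (L * ε') := by
    have h1 : ∀ j ∈ Finset.range m, (L/m) * f x * ((Real.exp (-(t + (j:ℝ)*(L/m))) + ε') * (1 - F x))
        = f x * (1 - F x) * (L/m) * Real.exp (-(t + (j:ℝ)*(L/m))) + f x * (1 - F x) * (L/m) * ε' :=
      fun j _ => by ring
    rw [Finset.sum_congr rfl h1, Finset.sum_add_distrib, ← Finset.mul_sum, Finset.sum_const,
      Finset.card_range, nsmul_eq_mul]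
    field_simp
  have hrw2 : ∑ j ∈ Finset.range m, (L/m) * f x * ((Real.exp (-(t + ((j:ℝ)+1)*(L/m))) - ε') * (1 - F x))
      = f x * (1 - F x) * ((L/m) * ∑ j ∈ Finset.range m, Real.exp (-(t + ((j:ℝ)+1)*(L/m))))
        - f x * (1 - F x) * (L * ε') := by
    have h1 : ∀ j ∈ Finset.range m, (L/m) * f x * ((Real.exp (-(t + ((j:ℝ)+1)*(L/m))) - ε') * (1 - F x))
        = f x * (1 - F x) * (L/m) * Real.exp (-(t + ((j:ℝ)+1)*(L/m))) - f x * (1 - F x) * (L/m) * ε' :=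
      fun j _ => by ring
    rw [Finset.sum_congr rfl h1, Finset.sum_sub_distrib, ← Finset.mul_sum, Finset.sum_const,
      Finset.card_range, nsmul_eq_mul]
    field_simp
  rw [hrw1] at hsumup
  rw [hrw2] at hsumlo
  obtain ⟨hexplo, hexpup⟩ := aux_expsum t L hL m hmN
  have hts' : t + L = s := by simp only [hLdef]; ring
  rw [hts'] at hexplo hexpup
  -- endpoints
  have hc0 : c 0 = x + t * f x := by simp [hcdef]
  have hcm : c m = x + s * f x := by
    have hmL : (m:ℝ)*(L/m) = L := by field_simp
    simp only [hcdef]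
    rw [hmL, hts']
  rw [hc0, hcm] at hsumup hsumlo
  -- final arithmetic
  set D := (∫ u in Set.Ioi (x + t * f x), (1 - F u)) - (∫ u in Set.Ioi (x + s * f x), (1 - F u)) with hDdef
  clear_value D
  set Δ := Real.exp (-t) - Real.exp (-s) with hΔdef
  clear_value Δ
  have hΔnn : 0 ≤ Δ := by
    simp only [hΔdef]
    have : Real.exp (-s) ≤ Real.exp (-t) := Real.exp_le_exp.2 (by linarith)
    linarith
  have hΔle : Δ ≤ Real.exp (-t) := by
    simp only [hΔdef]
    linarith [Real.exp_pos (-s)]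
  have hup2 : D ≤ f x * (1 - F x) * ((1 + L/m) * Δ) + f x * (1 - F x) * (L * ε') := by
    have := mul_le_mul_of_nonneg_left hexpup (le_of_lt hP)
    linarith
  have hlo2 : f x * (1 - F x) * ((1 - L/m) * Δ) - f x * (1 - F x) * (L * ε') ≤ D := by
    have := mul_le_mul_of_nonneg_left hexplo (le_of_lt hP)
    linarith
  have herr : (L/m) * Δ + L * ε' < ε := by
    have h1 : (L/m) * Δ ≤ (L/m) * Real.exp (-t) :=
      mul_le_mul_of_nonneg_left hΔle (le_of_lt (div_pos hL hm0))
    linarith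
  have hh1 : f x * (1 - F x) * ((L/m) * Δ + L * ε') < f x * (1 - F x) * ε :=
    mul_lt_mul_of_pos_left herr hP
  have hgoal1 : Δ - ε < D / (f x * (1 - F x)) := by
    rw [lt_div_iff₀ hP]
    linarith
  have hgoal2 : D / (f x * (1 - F x)) < Δ + ε := by
    rw [div_lt_iff₀ hP]
    linarith
  rw [Real.dist_eq, abs_lt]
  constructor <;> linarith

-- two-sided ratio bounds, eventually
lemma aux_hrat (F f : ℝ → ℝ) (l : Filter ℝ)
    (hl : (l = atTop ∧ ∀ x, F x < 1) ∨
      (∃ xR : ℝ, l = nhdsWithin xR (Set.Iio xR) ∧ (∀ x < xR, F x < 1) ∧ ∀ x ≥ xR, F x = 1))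
    (haux : ∀ t : ℝ,
      Tendsto (fun x => (1 - F (x + t * f x)) / (1 - F x)) l (nhds (Real.exp (-t))))
    (u : ℝ) :
    ∀ᶠ x in l, (1/2) * Real.exp (-u) * (1 - F x) ≤ 1 - F (x + u * f x) ∧
      1 - F (x + u * f x) ≤ (3/2) * Real.exp (-u) * (1 - F x) := by
  have h := Metric.tendsto_nhds.1 (haux u) (Real.exp (-u)/2) (by positivity)
  filter_upwards [h, aux_evF F l hl] with x hx hFx
  rw [Real.dist_eq, abs_lt] at hx
  have hB : 0 < 1 - F x := by linarith
  constructor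
  · have h1 : Real.exp (-u)/2 < (1 - F (x + u * f x))/(1 - F x) := by linarith [hx.1]
    rw [lt_div_iff₀ hB] at h1
    linarith
  · have h1 : (1 - F (x + u * f x))/(1 - F x) < 3/2 * Real.exp (-u) := by linarith [hx.2]
    rw [div_lt_iff₀ hB] at h1
    linarith

-- tail bound
lemma aux_tail (F f : ℝ → ℝ) (hmono : Monotone F) (hFnn : ∀ x, 0 ≤ F x) (hFle : ∀ x, F x ≤ 1)
    (hInt : IntegrableOn (fun t => 1 - F t) (Set.Ioi 0)) (l : Filter ℝ)
    (hl : (l = atTop ∧ ∀ x, F x < 1) ∨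
      (∃ xR : ℝ, l = nhdsWithin xR (Set.Iio xR) ∧ (∀ x < xR, F x < 1) ∧ ∀ x ≥ xR, F x = 1))
    (haux : ∀ t : ℝ,
      Tendsto (fun x => (1 - F (x + t * f x)) / (1 - F x)) l (nhds (Real.exp (-t))))
    (T : ℝ) (hT : 0 < T) :
    ∀ᶠ x in l, (∫ u in Set.Ioi (x + T * f x), (1 - F u))
      ≤ 15 * (T+4) * Real.exp (-T) * (f x * (1 - F x)) := by
  have hEv : ∀ᶠ x in l, 0 < f x ∧
      ((1/2) * Real.exp (-1) * (1 - F x) ≤ 1 - F (x + 1 * f x) ∧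
        1 - F (x + 1 * f x) ≤ (3/2) * Real.exp (-1) * (1 - F x)) ∧
      ((1/2) * Real.exp (-5) * (1 - F x) ≤ 1 - F (x + 5 * f x) ∧
        1 - F (x + 5 * f x) ≤ (3/2) * Real.exp (-5) * (1 - F x)) ∧
      ((1/2) * Real.exp (-9) * (1 - F x) ≤ 1 - F (x + 9 * f x) ∧
        1 - F (x + 9 * f x) ≤ (3/2) * Real.exp (-9) * (1 - F x)) := by
    filter_upwards [aux_evf F f hmono l hl haux, aux_hrat F f l hl haux 1,
      aux_hrat F f l hl haux 5, aux_hrat F f l hl haux 9] with x h0 h1 h5 h9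
    exact ⟨h0, h1, h5, h9⟩
  obtain ⟨a, haev, hEa⟩ := aux_goodD F l hl _ hEv
  have hGle := aux_GleB F f hmono hFnn hFle hInt l hl a (fun y hy hFy => by
    obtain ⟨h0, h1, h5, h9⟩ := hEa y hy hFy
    exact ⟨h0, h1.1, h5.1, h5.2, h9.2⟩)
  filter_upwards [haev, aux_hrat F f l hl haux T, aux_hrat F f l hl haux (T+4),
    aux_evf F f hmono l hl haux] with x hax hrT hrT4 hfx
  obtain ⟨hax', hFx⟩ := hax
  have hB : 0 < 1 - F x := by linarith
  have hFbT : 0 < 1 - F (x + T * f x) := lt_of_lt_of_le (by positivity) hrT.1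
  have hFxT : F (x + T * f x) < 1 := by linarith
  have haxT : a ≤ x + T * f x := by nlinarith
  obtain ⟨hfxT, h1T, -, -⟩ := hEa (x + T * f x) haxT hFxT
  have hfstep : f (x + T * f x) ≤ (T+4) * f x :=
    aux_fstep F f hmono T x hT hfx hFx hrT.1 hrT4.2 h1T.1
  have hG := hGle (x + T * f x) haxT hFxT
  have hprod : f (x + T * f x) * (1 - F (x + T * f x))
      ≤ ((T+4) * f x) * ((3/2) * Real.exp (-T) * (1 - F x)) :=
    mul_le_mul hfstep hrT.2 hFbT.le (by positivity)
  calc (∫ u in Set.Ioi (x + T * f x), (1 - F u))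
      ≤ 10 * (f (x + T * f x) * (1 - F (x + T * f x))) := hG
    _ ≤ 10 * (((T+4) * f x) * ((3/2) * Real.exp (-T) * (1 - F x))) := by linarith
    _ = 15 * (T+4) * Real.exp (-T) * (f x * (1 - F x)) := by ring

-- the limit  G x / (f x * (1 - F x)) → 1
lemma aux_cinv (F f : ℝ → ℝ) (hmono : Monotone F) (hFnn : ∀ x, 0 ≤ F x) (hFle : ∀ x, F x ≤ 1)
    (hInt : IntegrableOn (fun t => 1 - F t) (Set.Ioi 0)) (l : Filter ℝ)
    (hl : (l = atTop ∧ ∀ x, F x < 1) ∨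
      (∃ xR : ℝ, l = nhdsWithin xR (Set.Iio xR) ∧ (∀ x < xR, F x < 1) ∧ ∀ x ≥ xR, F x = 1))
    (haux : ∀ t : ℝ,
      Tendsto (fun x => (1 - F (x + t * f x)) / (1 - F x)) l (nhds (Real.exp (-t)))) :
    Tendsto (fun x => (∫ u in Set.Ioi x, (1 - F u)) / (f x * (1 - F x))) l (𝓝 1) := by
  rw [Metric.tendsto_nhds]
  intro ε hε
  set T := max 4 (363/ε) with hTdef
  have hT4 : (4:ℝ) ≤ T := le_max_left _ _
  have hTε : 363/ε ≤ T := le_max_right _ _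
  have hT0 : (0:ℝ) < T := by linarith
  have hTεmul : 363 ≤ T * ε := by
    rw [div_le_iff₀ hε] at hTε
    linarith
  -- exp T ≥ T^2/4
  have hexpT : T^2/4 ≤ Real.exp T := by
    have hA := Real.add_one_le_exp (T/2)
    have hAe : Real.exp T = Real.exp (T/2) * Real.exp (T/2) := by
      rw [← Real.exp_add]; ring_nf
    nlinarith [Real.exp_pos (T/2)]
  have hexpTinv : Real.exp (-T) ≤ 4/T^2 := by
    have hp : (0:ℝ) < T^2/4 := by positivity
    rw [Real.exp_neg, ← one_div, show (4:ℝ)/T^2 = 1/(T^2/4) by field_simp]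
    exact one_div_le_one_div_of_le hp hexpT
  have h3T : 1/T ≤ ε/363 := by
    rw [div_le_div_iff₀ hT0 (by norm_num : (0:ℝ) < 363)]
    linarith
  have hexp_small : Real.exp (-T) < ε/3 := by
    have h2 : 4/T^2 ≤ 1/T := by
      rw [div_le_div_iff₀ (by positivity) hT0]
      nlinarith
    linarith
  have htail_small : 15*(T+4)*Real.exp (-T) < ε/3 := by
    have hE1 : 15*(T+4) ≤ 30*T := by linarith
    have e1 : 15*(T+4)*Real.exp (-T) ≤ 30*T*Real.exp (-T) :=
      mul_le_mul_of_nonneg_right hE1 (Real.exp_pos _).le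
    have e2 : 30*T*Real.exp (-T) ≤ 30*T*(4/T^2) :=
      mul_le_mul_of_nonneg_left hexpTinv (by linarith)
    have hE3 : 30*T*(4/T^2) = 120*(1/T) := by field_simp; ring
    have hE4 : 120*(1/T) ≤ 120*(ε/363) := by linarith
    linarith
  have hC := aux_C F f hmono hFnn hFle hInt l hl haux 0 T (by linarith)
  have hCev := Metric.tendsto_nhds.1 hC (ε/3) (by linarith)
  filter_upwards [hCev, aux_tail F f hmono hFnn hFle hInt l hl haux T hT0,
    aux_evf F f hmono l hl haux, aux_evF F l hl] with x hcx htail hfx hFx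
  simp only [zero_mul, add_zero, neg_zero, Real.exp_zero] at hcx
  rw [Real.dist_eq] at hcx ⊢
  have hB : 0 < 1 - F x := by linarith
  have hP : 0 < f x * (1 - F x) := mul_pos hfx hB
  have h2 : 0 ≤ (∫ u in Set.Ioi (x + T * f x), (1 - F u)) := aux_G_nonneg F hFle _
  have h3 : (∫ u in Set.Ioi (x + T * f x), (1 - F u)) / (f x * (1-F x)) < ε/3 := by
    rw [div_lt_iff₀ hP]
    have := mul_lt_mul_of_pos_right htail_small hP
    linarith
  have h2' : 0 ≤ (∫ u in Set.Ioi (x + T * f x), (1 - F u)) / (f x * (1-F x)) :=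
    div_nonneg h2 hP.le
  have h4 : (∫ u in Set.Ioi x, (1 - F u)) / (f x * (1-F x))
      = ((∫ u in Set.Ioi x, (1 - F u)) - (∫ u in Set.Ioi (x + T * f x), (1 - F u))) / (f x * (1-F x))
        + (∫ u in Set.Ioi (x + T * f x), (1 - F u)) / (f x * (1-F x)) := by ring
  rw [abs_lt] at hcx ⊢
  have hexpTpos := Real.exp_pos (-T)
  constructor
  · linarith [hcx.1]
  · linarith [hcx.2]


/-- If `F ∈ MDA(Λ)` with auxiliary function `f`, i.e.
`F̄(x + t f(x)) / F̄(x) → e^{-t}` as `x ↑ x_R` for every `t`, then the equilibrium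
distribution `G` (with tail `Ḡ(x) = (1/EB) ∫ₓ^{x_R} F̄`) also satisfies
`Ḡ(x + t f(x)) / Ḡ(x) → e^{-t}` as `x ↑ x_R` for every `t ∈ ℝ`; that is,
`G ∈ MDA(Λ)` with the same auxiliary function `f`.  The approach filter `l` is
`atTop` if the right endpoint `x_R` is infinite and `𝓝[<] x_R` if it is finite. -/
theorem stmt8 (F f : ℝ → ℝ) (hmono : Monotone F) (hF0 : F 0 = 0)
    (hFnn : ∀ x, 0 ≤ F x) (hFle : ∀ x, F x ≤ 1)
    (EB : ℝ) (hEBpos : 0 < EB)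
    (hInt : IntegrableOn (fun t => 1 - F t) (Set.Ioi 0))
    (hEB : EB = ∫ t in Set.Ioi (0 : ℝ), (1 - F t))
    (l : Filter ℝ)
    (hl : (l = atTop ∧ ∀ x, F x < 1) ∨
      (∃ xR : ℝ, l = nhdsWithin xR (Set.Iio xR) ∧ (∀ x < xR, F x < 1) ∧ ∀ x ≥ xR, F x = 1))
    (haux : ∀ t : ℝ,
      Tendsto (fun x => (1 - F (x + t * f x)) / (1 - F x)) l (nhds (Real.exp (-t)))) :
    ∀ t : ℝ,
      Tendsto (fun x => (∫ s in Set.Ioi (x + t * f x), (1 - F s)) / (∫ s in Set.Ioi x, (1 - F s)))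
        l (nhds (Real.exp (-t))) := by
  intro t
  have hcinv := aux_cinv F f hmono hFnn hFle hInt l hl haux
  have hinv' : Tendsto (fun x => (f x * (1 - F x)) / (∫ s in Set.Ioi x, (1 - F s))) l (𝓝 1) := by
    have h := hcinv.inv₀ one_ne_zero
    rw [inv_one] at h
    apply h.congr
    intro x
    exact inv_div _ _
  have hnum : Tendsto (fun x => ((∫ s in Set.Ioi (x + t * f x), (1 - F s))
      - (∫ s in Set.Ioi x, (1 - F s))) / (f x * (1 - F x))) l (𝓝 (Real.exp (-t) - 1)) := by
    rcases le_total 0 t with h0t | ht0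
    · have hC := aux_C F f hmono hFnn hFle hInt l hl haux 0 t h0t
      have h2 := hC.neg
      simp only [zero_mul, add_zero, neg_zero, Real.exp_zero] at h2
      have h3 : (-(1 - Real.exp (-t))) = Real.exp (-t) - 1 := by ring
      rw [h3] at h2
      apply h2.congr
      intro x
      ring
    · have hC := aux_C F f hmono hFnn hFle hInt l hl haux t 0 ht0
      simp only [zero_mul, add_zero, neg_zero, Real.exp_zero] at hC
      exact hC
  have hsum := hnum.add hcinv
  have h3 : (Real.exp (-t) - 1) + 1 = Real.exp (-t) := by ring
  rw [h3] at hsum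
  have hGt : Tendsto (fun x => (∫ s in Set.Ioi (x + t * f x), (1 - F s)) / (f x * (1 - F x)))
      l (𝓝 (Real.exp (-t))) := by
    apply hsum.congr
    intro x
    ring
  have hmul := hGt.mul hinv'
  rw [mul_one] at hmul
  apply Filter.Tendsto.congr' ?_ hmul
  filter_upwards [aux_evf F f hmono l hl haux, aux_evF F l hl] with x hfx hFx
  have hP : f x * (1 - F x) ≠ 0 := ne_of_gt (mul_pos hfx (by linarith))
  rw [div_mul_div_comm, mul_comm (∫ s in Set.Ioi (x + t * f x), (1 - F s)) (f x * (1 - F x)),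
    mul_div_mul_left _ _ hP]
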